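/- Let U ⊆ S^m_d be a quasi-stable monomial module and G a P(U)-marked basis. Then for every degree s the A-module ⟨G⟩_s is free of rank equal to the number of terms of U of degree s; in particular the S-module ⟨G⟩ generated by G admits a Hilbert function and it coincides with the Hilbert function of U. -/

import Mathlib

open MvPolynomial

namespace MB

/-- Exponent (multi-index) of a term in the variables `x_0, …, x_n`. -/
abbrev Exp (n : ℕ) := Fin (n+1) →₀ ℕ

variable {n : ℕ}

/-- Total degree of a term. -/
def degE (α : Exp n) : ℕ := α.sum fun _ e => e

/-- `x_i` is a multiplicative variable for the term `x^α`, i.e. `x_i ≤ min(x^α)`. -/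
def mult (α : Exp n) (i : Fin (n+1)) : Prop := ∀ j ∈ α.support, i ≤ j

/-- Every variable occurring in `x^δ` is multiplicative for `x^α`. -/
def multExp (α δ : Exp n) : Prop := ∀ i ∈ δ.support, mult α i

/-- Pommaret cone of a term. -/
def pommaretCone (α : Exp n) : Set (Exp n) := {γ | ∃ δ, multExp α δ ∧ γ = α + δ}

/-- A set of terms is (the set of terms of) a monomial ideal. -/
def IsMonomialIdeal (T : Set (Exp n)) : Prop := ∀ α ∈ T, ∀ β, α + β ∈ T

/-- `P` is a Pommaret basis of the set of terms `T`: the terms of `T` are the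
disjoint union of the Pommaret cones of the elements of `P`. -/
def IsPommaretBasis (P : Finset (Exp n)) (T : Set (Exp n)) : Prop :=
  (∀ γ, γ ∈ T ↔ ∃ α ∈ P, γ ∈ pommaretCone α) ∧
  ∀ γ : Exp n, ∀ α ∈ P, ∀ β ∈ P, γ ∈ pommaretCone α → γ ∈ pommaretCone β → α = β

/-- Lexicographic order on terms (with `x_n > … > x_0` significance). -/
def lexLt (η δ : Exp n) : Prop := ∃ i, η i < δ i ∧ ∀ j, i < j → η j = δ j

/-- Terms of the saturation `(J : (x_0,…,x_n)^∞)` of a monomial ideal. -/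
def satTerms (T : Set (Exp n)) : Set (Exp n) :=
  {α | ∃ j : ℕ, ∀ β : Exp n, degE β = j → α + β ∈ T}

section ModuleDefs

variable (A : Type*) [CommRing A] {κ : Type*} [Fintype κ] [DecidableEq κ]

/-- The term `x^α e_k` of the free module. -/
noncomputable def termV (α : Exp n) (k : κ) : κ → MvPolynomial (Fin (n+1)) A :=
  Pi.single k (monomial α 1)

variable {A}

/-- Homogeneity of degree `s` in `S^m_d` (with weight vector `d`). -/
def IsHomogV (d : κ → ℤ) (f : κ → MvPolynomial (Fin (n+1)) A) (s : ℤ) : Prop :=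
  ∀ k, ∀ β ∈ (f k).support, (degE β : ℤ) + d k = s

variable (A)

/-- The degree-`s` component `(S^m_d)_s` as an `A`-submodule. -/
noncomputable def homogCompV (d : κ → ℤ) (s : ℤ) :
    Submodule A (κ → MvPolynomial (Fin (n+1)) A) where
  carrier := {f | IsHomogV d f s}
  add_mem' := by
    intro f g hf hg k β hβ
    rcases Finset.mem_union.mp (MvPolynomial.support_add hβ) with h | h
    · exact hf k β h
    · exact hg k β h
  zero_mem' := by intro k β hβ; simp at hβ
  smul_mem' := by
    intro a f hf k β hβ
    exact hf k β (MvPolynomial.support_smul hβ)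

/-- The set `N(U)` of terms of `S^m_d` not belonging to the monomial module `U = ⊕ J^(k) e_k`. -/
def NUTerms (J : κ → Set (Exp n)) : Set (κ → MvPolynomial (Fin (n+1)) A) :=
  {v | ∃ k, ∃ α, α ∉ J k ∧ v = termV A α k}

/-- The degree-`s` part `N(U)_s`. -/
def NUTermsDeg (d : κ → ℤ) (J : κ → Set (Exp n)) (s : ℤ) :
    Set (κ → MvPolynomial (Fin (n+1)) A) :=
  {v | ∃ k, ∃ α, α ∉ J k ∧ (degE α : ℤ) + d k = s ∧ v = termV A α k}

variable {A}

/-- A `P(U)`-marked set: for each `x^α e_k` with `α ∈ P k`, the element `g α k` has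
head term `x^α e_k` (coefficient `1`) and all other terms in `N(U)` of the same degree. -/
def IsMarkedSetV (d : κ → ℤ) (J : κ → Set (Exp n)) (P : κ → Finset (Exp n))
    (g : Exp n → κ → (κ → MvPolynomial (Fin (n+1)) A)) : Prop :=
  ∀ k, ∀ α ∈ P k, ∀ l, ∀ β ∈ ((g α k - termV A α k) l).support,
    β ∉ J l ∧ (degE β : ℤ) + d l = (degE α : ℤ) + d k

/-- The underlying set of elements of the marked set `G`. -/
def GSet (P : κ → Finset (Exp n)) (g : Exp n → κ → (κ → MvPolynomial (Fin (n+1)) A)) :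
    Set (κ → MvPolynomial (Fin (n+1)) A) :=
  {v | ∃ k, ∃ α ∈ P k, v = g α k}

/-- The set `G^(s)` of multiplicative multiples of elements of `G` of degree `s`. -/
def GSdeg (d : κ → ℤ) (P : κ → Finset (Exp n))
    (g : Exp n → κ → (κ → MvPolynomial (Fin (n+1)) A)) (s : ℤ) :
    Set (κ → MvPolynomial (Fin (n+1)) A) :=
  {v | ∃ k, ∃ α ∈ P k, ∃ δ : Exp n, multExp α δ ∧
    (degE δ : ℤ) + (degE α : ℤ) + d k = s ∧ v = (monomial δ (1:A)) • g α k}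

/-- The `S`-submodule `⟨G⟩` generated by the marked set. -/
noncomputable def GmodS (P : κ → Finset (Exp n))
    (g : Exp n → κ → (κ → MvPolynomial (Fin (n+1)) A)) :
    Submodule (MvPolynomial (Fin (n+1)) A) (κ → MvPolynomial (Fin (n+1)) A) :=
  Submodule.span _ (GSet P g)

/-- The degree-`s` component `⟨G⟩_s` as an `A`-submodule. -/
noncomputable def GmodDeg (d : κ → ℤ) (P : κ → Finset (Exp n))
    (g : Exp n → κ → (κ → MvPolynomial (Fin (n+1)) A)) (s : ℤ) :
    Submodule A (κ → MvPolynomial (Fin (n+1)) A) :=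
  (GmodS P g).restrictScalars A ⊓ homogCompV A d s

/-- `G` is a marked basis: `(S^m_d)_s = ⟨G⟩_s ⊕ ⟨N(U)_s⟩^A` for every degree `s`. -/
def MarkedBasisProp (d : κ → ℤ) (J : κ → Set (Exp n)) (P : κ → Finset (Exp n))
    (g : Exp n → κ → (κ → MvPolynomial (Fin (n+1)) A)) : Prop :=
  ∀ s : ℤ,
    homogCompV A d s = GmodDeg d P g s ⊔ Submodule.span A (NUTermsDeg A d J s) ∧
    GmodDeg d P g s ⊓ Submodule.span A (NUTermsDeg A d J s) = ⊥

/-- One step of the reduction relation `→_G`. -/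
def RedStep (P : κ → Finset (Exp n)) (g : Exp n → κ → (κ → MvPolynomial (Fin (n+1)) A))
    (h h' : κ → MvPolynomial (Fin (n+1)) A) : Prop :=
  ∃ k, ∃ α ∈ P k, ∃ η : Exp n, multExp α η ∧
    (h k).coeff (η + α) ≠ 0 ∧
    h' = h - ((h k).coeff (η + α)) • ((monomial η (1:A)) • g α k)

end ModuleDefs

section IdealDefs

variable {A : Type*} [CommRing A]

/-- A `P(J)`-marked set of polynomials. -/
def IsMarkedSetI (T : Set (Exp n)) (P : Finset (Exp n))
    (g : Exp n → MvPolynomial (Fin (n+1)) A) : Prop :=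
  ∀ α ∈ P, ∀ β ∈ (g α - monomial α (1:A)).support, β ∉ T ∧ degE β = degE α

variable (A)

/-- The degree-`s` monomials not in `T`. -/
def NTermsDegI (T : Set (Exp n)) (s : ℕ) : Set (MvPolynomial (Fin (n+1)) A) :=
  {p | ∃ β, β ∉ T ∧ degE β = s ∧ p = monomial β (1:A)}

variable {A}

/-- Degree-`s` part of the ideal generated by the marked set. -/
noncomputable def IdealDegI (P : Finset (Exp n)) (g : Exp n → MvPolynomial (Fin (n+1)) A)
    (s : ℕ) : Submodule A (MvPolynomial (Fin (n+1)) A) :=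
  (Ideal.span (g '' ↑P)).restrictScalars A ⊓ homogeneousSubmodule (Fin (n+1)) A s

/-- A `P(J)`-marked basis of polynomials: `S_s = (G)_s ⊕ ⟨N(J)_s⟩^A` for all `s`. -/
def IsMarkedBasisI (T : Set (Exp n)) (P : Finset (Exp n))
    (g : Exp n → MvPolynomial (Fin (n+1)) A) : Prop :=
  IsMarkedSetI T P g ∧ ∀ s : ℕ,
    homogeneousSubmodule (Fin (n+1)) A s
      = IdealDegI P g s ⊔ Submodule.span A (NTermsDegI A T s) ∧
    IdealDegI P g s ⊓ Submodule.span A (NTermsDegI A T s) = ⊥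

/-- The polynomial `p` involves only multiplicative variables of `x^α`. -/
def multPoly (α : Exp n) (p : MvPolynomial (Fin (n+1)) A) : Prop :=
  ∀ β ∈ p.support, multExp α β

end IdealDefs

section SyzDefs

variable {A : Type*} [CommRing A]

/-- The map `(c_l) ↦ Σ_l c_l f_{α(l)}` whose kernel is `Syz(G)`. -/
noncomputable def syzMap (P : Finset (Exp n)) (g : Exp n → MvPolynomial (Fin (n+1)) A) :
    (↥P → MvPolynomial (Fin (n+1)) A) →ₗ[MvPolynomial (Fin (n+1)) A]
      MvPolynomial (Fin (n+1)) A where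
  toFun c := ∑ l : ↥P, c l * g l.1
  map_add' c c' := by simp [add_mul, Finset.sum_add_distrib]
  map_smul' a c := by simp [Finset.mul_sum, mul_assoc]

/-- Weight vector for the syzygy module: `d_l = deg x^{α(l)}`. -/
def ddeg (P : Finset (Exp n)) : ↥P → ℤ := fun l => (degE l.1 : ℤ)

/-- Terms of the monomial ideal generated by the nonmultiplicative variables of `x^{α(l)}`. -/
def Jsyz (P : Finset (Exp n)) : ↥P → Set (Exp n) :=
  fun l => {β | ∃ i ∈ β.support, ¬ mult (l : Exp n) i}

open Classical in
/-- The claimed Pommaret basis `{x_i e_l : x_i nonmultiplicative for x^{α(l)}}`. -/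
noncomputable def Psyz (P : Finset (Exp n)) : ↥P → Finset (Exp n) := fun l =>
  (Finset.univ.filter fun i : Fin (n+1) => ¬ mult (l : Exp n) i).image
    fun i => Finsupp.single i 1

open Classical in
/-- The syzygy `S_{k;i} = x_i e_k − Σ_l P_l^{k;i} e_l`. -/
noncomputable def Ssyz (P : Finset (Exp n))
    (Pc : ↥P → Fin (n+1) → ↥P → MvPolynomial (Fin (n+1)) A)
    (k : ↥P) (i : Fin (n+1)) : ↥P → MvPolynomial (Fin (n+1)) A :=
  fun l => (if l = k then (X i : MvPolynomial (Fin (n+1)) A) else 0) - Pc k i l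

/-- The set `G_Syz^(s)`. -/
def GSyzDeg (P : Finset (Exp n))
    (Pc : ↥P → Fin (n+1) → ↥P → MvPolynomial (Fin (n+1)) A) (s : ℤ) :
    Set (↥P → MvPolynomial (Fin (n+1)) A) :=
  {v | ∃ k : ↥P, ∃ i : Fin (n+1), ¬ mult (k : Exp n) i ∧ ∃ δ : Exp n,
    (∀ j ∈ δ.support, j ≤ i) ∧ (degE δ : ℤ) + 1 + ddeg P k = s ∧
    v = (monomial δ (1:A)) • Ssyz P Pc k i}

end SyzDefs

section HFAux

variable {n : ℕ} {κ : Type*} [Fintype κ] [DecidableEq κ] {A : Type*} [CommRing A]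

lemma termV_coeff (α β : Exp n) (k l : κ) :
    ((termV A α k l).coeff β : A) = if l = k ∧ β = α then 1 else 0 := by
  unfold termV
  rcases eq_or_ne l k with h | h
  · subst h
    rw [Pi.single_eq_same, MvPolynomial.coeff_monomial]
    by_cases hβ : β = α
    · subst hβ; simp
    · rw [if_neg fun h => hβ h.symm, if_neg (by simp [hβ])]
  · simp [Pi.single_eq_of_ne h, h]

lemma termV_mem_homog {d : κ → ℤ} {s : ℤ} {α : Exp n} {k : κ}
    (h : (degE α : ℤ) + d k = s) : termV A α k ∈ homogCompV A d s := by
  intro l β hβ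
  rcases eq_or_ne l k with hl | hl
  · subst hl
    obtain ⟨h1, -⟩ : α = β ∧ ¬(1:A) = 0 := by simpa [termV] using hβ
    subst h1; exact h
  · simp [termV, Pi.single_eq_of_ne hl] at hβ

lemma eq_sum_termV (v : κ → MvPolynomial (Fin (n+1)) A) :
    v = ∑ k : κ, ∑ β ∈ (v k).support, (v k).coeff β • termV A β k := by
  funext l
  simp only [Finset.sum_apply, Pi.smul_apply]
  rw [Finset.sum_eq_single l]
  · have : ∀ β ∈ (v l).support, (v l).coeff β • termV A β l l
        = monomial β ((v l).coeff β) := by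
      intro β _
      simp [termV, MvPolynomial.smul_monomial]
    rw [Finset.sum_congr rfl this, MvPolynomial.support_sum_monomial_coeff]
  · intro k _ hk
    simp [termV, Pi.single_eq_of_ne (Ne.symm hk)]
  · simp

open Classical in
/-- Coordinate map extracting the coefficients on the terms of `U` of degree `s`. -/
noncomputable def coordL (J : κ → Set (Exp n)) (d : κ → ℤ) (s : ℤ) :
    (κ → MvPolynomial (Fin (n+1)) A) →ₗ[A]
    ({p : Exp n × κ // p.1 ∈ J p.2 ∧ (degE p.1 : ℤ) + d p.2 = s} →₀ A) where
  toFun v := Finsupp.onFinset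
    ((Finset.univ.biUnion fun k : κ => (v k).support.image fun β => ((β, k) : Exp n × κ)).subtype
      fun p => p.1 ∈ J p.2 ∧ (degE p.1 : ℤ) + d p.2 = s)
    (fun p => (v p.1.2).coeff p.1.1)
    (by
      intro p hp
      rw [Finset.mem_subtype]
      exact Finset.mem_biUnion.2 ⟨p.1.2, Finset.mem_univ _,
        Finset.mem_image.2 ⟨p.1.1, MvPolynomial.mem_support_iff.2 hp, rfl⟩⟩)
  map_add' u v := by ext q; simp
  map_smul' a v := by ext q; simp [MvPolynomial.coeff_smul]

lemma coordL_apply (J : κ → Set (Exp n)) (d : κ → ℤ) (s : ℤ)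
    (v : κ → MvPolynomial (Fin (n+1)) A)
    (q : {p : Exp n × κ // p.1 ∈ J p.2 ∧ (degE p.1 : ℤ) + d p.2 = s}) :
    coordL J d s v q = (v q.1.2).coeff q.1.1 := rfl

lemma coordL_termV (J : κ → Set (Exp n)) (d : κ → ℤ) (s : ℤ) (α : Exp n) (k : κ)
    (hp : α ∈ J k ∧ (degE α : ℤ) + d k = s) :
    coordL (A := A) J d s (termV A α k) = Finsupp.single ⟨(α, k), hp⟩ 1 := by
  ext q
  rw [coordL_apply, termV_coeff, Finsupp.single_apply]
  have : (⟨(α, k), hp⟩ : {p : Exp n × κ // p.1 ∈ J p.2 ∧ (degE p.1 : ℤ) + d p.2 = s}) = q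
      ↔ (q.1.2 = k ∧ q.1.1 = α) := by
    constructor
    · rintro rfl; exact ⟨rfl, rfl⟩
    · rintro ⟨h1, h2⟩
      apply Subtype.ext
      exact Prod.ext h2.symm h1.symm
  by_cases h : q.1.2 = k ∧ q.1.1 = α
  · rw [if_pos h, if_pos (this.2 h)]
  · rw [if_neg h, if_neg (fun hh => h (this.1 hh))]

lemma coordL_termV_notJ (J : κ → Set (Exp n)) (d : κ → ℤ) (s : ℤ) (α : Exp n) (k : κ)
    (hα : α ∉ J k) : coordL (A := A) J d s (termV A α k) = 0 := by
  ext q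
  rw [coordL_apply, termV_coeff]
  rw [if_neg]
  · rfl
  · rintro ⟨h1, h2⟩
    exact hα (h2 ▸ h1 ▸ q.2.1)

end HFAux

/-- Remark `HFunc`: if `G` is a `P(U)`-marked basis then every component
`⟨G⟩_s` is a free `A`-module whose rank is the number of degree-`s` terms of `U`; hence
`⟨G⟩` admits a Hilbert function which coincides with the Hilbert function of `U`. -/
theorem statement13 {n : ℕ} {κ : Type*} [Fintype κ] [DecidableEq κ] (hm : Nonempty κ)
    {A : Type*} [CommRing A] [IsNoetherianRing A]
    (d : κ → ℤ) (J : κ → Set (Exp n)) (P : κ → Finset (Exp n))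
    (hQS : ∀ k, IsMonomialIdeal (J k) ∧ IsPommaretBasis (P k) (J k))
    (gb : Exp n → κ → (κ → MvPolynomial (Fin (n+1)) A))
    (hG : IsMarkedSetV d J P gb) (hB : MarkedBasisProp d J P gb) :
    ∀ s : ℤ, Nonempty (Module.Basis {p : Exp n × κ // p.1 ∈ J p.2 ∧ (degE p.1 : ℤ) + d p.2 = s}
      A (GmodDeg d P gb s)) := by
  intro s
  classical
  set φ := coordL (A := A) J d s with hφdef
  let e : GmodDeg d P gb s →ₗ[A]
      ({p : Exp n × κ // p.1 ∈ J p.2 ∧ (degE p.1 : ℤ) + d p.2 = s} →₀ A) :=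
    φ.comp (GmodDeg d P gb s).subtype
  -- span of N(U)_s is killed by φ
  have hNU : ∀ v ∈ Submodule.span A (NUTermsDeg A d J s), φ v = 0 := by
    intro v hv
    have hle : Submodule.span A (NUTermsDeg A d J s) ≤ LinearMap.ker φ := by
      rw [Submodule.span_le]
      rintro _ ⟨k, α, hα, _, rfl⟩
      exact LinearMap.mem_ker.2 (coordL_termV_notJ J d s α k hα)
    exact LinearMap.mem_ker.1 (hle hv)
  -- homogeneous elements with vanishing coordinates lie in span N(U)_s
  have hker : ∀ v ∈ homogCompV A d s, φ v = 0 →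
      v ∈ Submodule.span A (NUTermsDeg A d J s) := by
    intro v hv hv0
    rw [eq_sum_termV v]
    refine Submodule.sum_mem _ fun k _ => Submodule.sum_mem _ fun β hβ => ?_
    refine Submodule.smul_mem _ _ (Submodule.subset_span ?_)
    have hdeg : (degE β : ℤ) + d k = s := hv k β hβ
    have hβJ : β ∉ J k := by
      intro hJ
      have := DFunLike.congr_fun hv0 ⟨(β, k), hJ, hdeg⟩
      rw [coordL_apply] at this
      exact MvPolynomial.mem_support_iff.1 hβ this
    exact ⟨k, β, hβJ, hdeg, rfl⟩
  have hinj : Function.Injective e := by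
    have hz : ∀ v : GmodDeg d P gb s, e v = 0 → v = 0 := by
      intro v hv
      have hvm : (v : κ → MvPolynomial (Fin (n+1)) A) ∈
          (GmodS P gb).restrictScalars A ⊓ homogCompV A d s := v.2
      rw [Submodule.mem_inf] at hvm
      have h1 : (v : κ → MvPolynomial (Fin (n+1)) A)
          ∈ Submodule.span A (NUTermsDeg A d J s) := hker _ hvm.2 hv
      have h2 : (v : κ → MvPolynomial (Fin (n+1)) A)
          ∈ GmodDeg d P gb s ⊓ Submodule.span A (NUTermsDeg A d J s) :=
        Submodule.mem_inf.2 ⟨v.2, h1⟩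
      rw [(hB s).2, Submodule.mem_bot] at h2
      exact Subtype.ext h2
    intro a b hab
    have : a - b = 0 := hz _ (by rw [map_sub, hab, sub_self])
    exact sub_eq_zero.mp this
  have hsurj : Function.Surjective e := by
    intro w
    set u : κ → MvPolynomial (Fin (n+1)) A :=
      ∑ q ∈ w.support, w q • termV A q.1.1 q.1.2 with hu_def
    have hu : u ∈ homogCompV A d s :=
      Submodule.sum_mem _ fun q _ => Submodule.smul_mem _ _ (termV_mem_homog q.2.2)
    have hu' : u ∈ GmodDeg d P gb s ⊔ Submodule.span A (NUTermsDeg A d J s) := by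
      rw [← (hB s).1]; exact hu
    rcases Submodule.mem_sup.1 hu' with ⟨a, ha, b, hb, hab⟩
    refine ⟨⟨a, ha⟩, ?_⟩
    have hφu : φ u = w := by
      rw [hu_def, map_sum]
      have : ∀ q ∈ w.support, φ (w q • termV A q.1.1 q.1.2)
          = Finsupp.single q (w q) := by
        intro q _
        rw [map_smul, coordL_termV J d s q.1.1 q.1.2 q.2, Finsupp.smul_single,
          smul_eq_mul, mul_one]
      rw [Finset.sum_congr rfl this]
      exact Finsupp.sum_single w
    have hφa : φ a = w := by
      have : φ a + φ b = w := by rw [← map_add, hab, hφu]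
      rwa [hNU b hb, add_zero] at this
    exact hφa
  exact ⟨Module.Basis.ofRepr (LinearEquiv.ofBijective e ⟨hinj, hsurj⟩)⟩


end MB
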